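/- arXiv:1803.01432 — 5 statements merged into one kernel-verified Lean document; each statement's English description precedes it below -/
import Mathlib

section
/- Let B be an additive category and let M = (M^i) be a cochain complex over B that, in the homotopy category K(B), is a retract of a complex concentrated in degree 0 (i.e., of M'[0] for some object M' of B). Then M is a retract in K(B) of the complex M^0[0] (its own degree-zero term placed in degree 0). -/
open CategoryTheory Limits

universe v u

/-- if a cochain complex `M` over an additive category `B` is a
retract, in the homotopy category `K(B)`, of a complex `M'[0]` concentrated in
degree `0`, then `M` is a retract in `K(B)` of `(M.X 0)[0]`, i.e. of its own
degree-zero term placed in degree `0`. -/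
theorem stmt0 {B : Type u} [Category.{v} B] [Preadditive B] [HasZeroObject B]
    (M : CochainComplex B ℤ) (M' : B)
    (h : ∃ (i : (HomotopyCategory.quotient B (ComplexShape.up ℤ)).obj M ⟶
            (HomotopyCategory.quotient B (ComplexShape.up ℤ)).obj
              ((HomologicalComplex.single B (ComplexShape.up ℤ) 0).obj M'))
         (r : (HomotopyCategory.quotient B (ComplexShape.up ℤ)).obj
              ((HomologicalComplex.single B (ComplexShape.up ℤ) 0).obj M') ⟶
            (HomotopyCategory.quotient B (ComplexShape.up ℤ)).obj M),
         i ≫ r = 𝟙 ((HomotopyCategory.quotient B (ComplexShape.up ℤ)).obj M)) :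
    ∃ (i : (HomotopyCategory.quotient B (ComplexShape.up ℤ)).obj M ⟶
            (HomotopyCategory.quotient B (ComplexShape.up ℤ)).obj
              ((HomologicalComplex.single B (ComplexShape.up ℤ) 0).obj (M.X 0)))
      (r : (HomotopyCategory.quotient B (ComplexShape.up ℤ)).obj
              ((HomologicalComplex.single B (ComplexShape.up ℤ) 0).obj (M.X 0)) ⟶
            (HomotopyCategory.quotient B (ComplexShape.up ℤ)).obj M),
      i ≫ r = 𝟙 ((HomotopyCategory.quotient B (ComplexShape.up ℤ)).obj M) := by
  obtain ⟨i, r, hir⟩ := h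
  obtain ⟨f, hf⟩ := (HomotopyCategory.quotient B (ComplexShape.up ℤ)).map_surjective i
  obtain ⟨g, hg⟩ := (HomotopyCategory.quotient B (ComplexShape.up ℤ)).map_surjective r
  set e : M.X 0 ⟶ M.X 0 := f.f 0 ≫ g.f 0 with he
  have hf0 : ∀ (k : ℤ), (ComplexShape.up ℤ).Rel k 0 → M.d k 0 ≫ e = 0 := by
    intro k hk
    have := f.comm k 0
    rw [he, ← Category.assoc, ← this]
    simp [HomologicalComplex.single_obj_d]
  have hg0 : ∀ (k : ℤ), (ComplexShape.up ℤ).Rel 0 k → e ≫ M.d 0 k = 0 := by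
    intro k hk
    have := g.comm 0 k
    rw [he, Category.assoc, this]
    simp [HomologicalComplex.single_obj_d]
  refine ⟨(HomotopyCategory.quotient B (ComplexShape.up ℤ)).map
      (HomologicalComplex.mkHomToSingle e hf0),
    (HomotopyCategory.quotient B (ComplexShape.up ℤ)).map
      (HomologicalComplex.mkHomFromSingle e hg0), ?_⟩
  have key : HomologicalComplex.mkHomToSingle e hf0 ≫
      HomologicalComplex.mkHomFromSingle e hg0 = (f ≫ g) ≫ (f ≫ g) := by
    ext n
    by_cases h0 : n = 0
    · subst h0
      simp [he]
    · have hz := HomologicalComplex.isZero_single_obj_X (ComplexShape.up ℤ) 0 M' n h0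
      have hz' := HomologicalComplex.isZero_single_obj_X (ComplexShape.up ℤ) 0 (M.X 0) n h0
      simp only [HomologicalComplex.comp_f]
      rw [hz'.eq_of_tgt ((HomologicalComplex.mkHomToSingle e hf0).f n) 0,
        hz.eq_of_tgt (f.f n) 0]
      simp
  rw [← Functor.map_comp, key, Functor.map_comp, Functor.map_comp, hf, hg, hir,
    Category.comp_id]
end

section
/- Let C and D be triangulated categories equipped with weight structures w and v respectively, and let F : C \to D and G : D \to C be exact functors with F left adjoint to G. Then F is left weight-exact (i.e., F(C_{w\le 0}) \subseteq D_{v\le 0}) if and only if G is right weight-exact (i.e., G(D_{v\ge 0}) \subseteq C_{w\ge 0}). -/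
open CategoryTheory Limits Pretriangulated Opposite

universe v u v₂ u₂

variable (C : Type u) [Category.{v} C] [Preadditive C] [HasZeroObject C] [HasShift C ℤ]
  [∀ n : ℤ, (shiftFunctor C n).Additive] [Pretriangulated C]

/-- A weight structure on a triangulated category (Bondarko, homological convention). -/
structure WeightStructure where
  le : Set C
  ge : Set C
  le_retract : ∀ ⦃X Y : C⦄, X ∈ le → ∀ (i : Y ⟶ X) (r : X ⟶ Y), i ≫ r = 𝟙 Y → Y ∈ le
  ge_retract : ∀ ⦃X Y : C⦄, X ∈ ge → ∀ (i : Y ⟶ X) (r : X ⟶ Y), i ≫ r = 𝟙 Y → Y ∈ ge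
  le_shift : ∀ ⦃X : C⦄, X ∈ le → X⟦(-1 : ℤ)⟧ ∈ le
  ge_shift : ∀ ⦃X : C⦄, X ∈ ge → X⟦(1 : ℤ)⟧ ∈ ge
  orthogonal : ∀ ⦃X Y : C⦄, X ∈ le → Y⟦(-1 : ℤ)⟧ ∈ ge → ∀ f : X ⟶ Y, f = 0
  decomp : ∀ M : C, ∃ (X Y : C) (f : X ⟶ M) (g : M ⟶ Y) (h : Y ⟶ X⟦(1 : ℤ)⟧),
    Triangle.mk f g h ∈ (distTriang C) ∧ X ∈ le ∧ Y⟦(-1 : ℤ)⟧ ∈ ge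

section Aux

variable {C}

/-- `ge` is closed under isomorphism. -/
lemma WS.ge_iso (w : WeightStructure C) {X Y : C} (e : X ≅ Y) (h : X ∈ w.ge) : Y ∈ w.ge :=
  w.ge_retract h e.inv e.hom (by simp)

/-- `le` is closed under isomorphism. -/
lemma WS.le_iso (w : WeightStructure C) {X Y : C} (e : X ≅ Y) (h : X ∈ w.le) : Y ∈ w.le :=
  w.le_retract h e.inv e.hom (by simp)

lemma WS.shift_neg_mem (w : WeightStructure C) {Y : C} (h : Y ∈ w.ge) :
    (Y⟦(1:ℤ)⟧)⟦(-1:ℤ)⟧ ∈ w.ge :=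
  WS.ge_iso w (shiftShiftNeg Y 1).symm h

/-- Characterization of `ge` by orthogonality. -/
lemma WS.ge_iff (w : WeightStructure C) (Y : C) :
    Y ∈ w.ge ↔ ∀ X ∈ w.le, ∀ f : X ⟶ Y⟦(1:ℤ)⟧, f = 0 := by
  constructor
  · intro h X hX f
    exact w.orthogonal hX (WS.shift_neg_mem w h) f
  · intro H
    obtain ⟨A, B, f, g, h, hT, hA, hB⟩ := w.decomp (Y⟦(1:ℤ)⟧)
    have hf : f = 0 := H A hA f
    obtain ⟨r, hr⟩ : ∃ r : B ⟶ Y⟦(1:ℤ)⟧, 𝟙 _ = g ≫ r :=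
      Triangle.yoneda_exact₂ _ hT (𝟙 _) (by show f ≫ _ = 0; rw [hf]; exact Limits.zero_comp)
    have key : (𝟙 (Y⟦(1:ℤ)⟧) : _) = g ≫ r := hr
    refine w.ge_retract hB ((shiftShiftNeg Y 1).inv ≫ (shiftFunctor C (-1)).map g)
      ((shiftFunctor C (-1)).map r ≫ (shiftShiftNeg Y 1).hom) ?_
    rw [Category.assoc, ← Category.assoc ((shiftFunctor C (-1)).map g),
      ← Functor.map_comp, ← key]
    rw [CategoryTheory.Functor.map_id, Category.id_comp, Iso.inv_hom_id]

/-- Characterization of `le` by orthogonality. -/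
lemma WS.le_iff (w : WeightStructure C) (X : C) :
    X ∈ w.le ↔ ∀ Y ∈ w.ge, ∀ f : X ⟶ Y⟦(1:ℤ)⟧, f = 0 := by
  constructor
  · intro h Y hY f
    exact w.orthogonal h (WS.shift_neg_mem w hY) f
  · intro H
    obtain ⟨A, B, f, g, h, hT, hA, hB⟩ := w.decomp X
    have hg : g = 0 := by
      have := H (B⟦(-1:ℤ)⟧) hB (g ≫ (shiftNegShift B 1).inv)
      have := congrArg (fun φ => φ ≫ (shiftNegShift B 1).hom) this
      rw [Category.assoc, Iso.inv_hom_id, Category.comp_id, Limits.zero_comp] at this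
      exact this
    obtain ⟨i, hi⟩ := Triangle.coyoneda_exact₂ _ hT (𝟙 _) (by show _ ≫ g = 0; rw [hg]; exact Limits.comp_zero)
    exact w.le_retract hA i f hi.symm

end Aux

/-- for an adjunction `F ⊣ G` of exact functors between triangulated
categories with weight structures, `F` is left weight-exact iff `G` is right weight-exact. -/
theorem stmt8 {D : Type u₂} [Category.{v₂} D] [Preadditive D] [HasZeroObject D] [HasShift D ℤ]
    [∀ n : ℤ, (shiftFunctor D n).Additive] [Pretriangulated D]
    (w : WeightStructure C) (v : WeightStructure D)
    (F : C ⥤ D) (G : D ⥤ C) [F.CommShift ℤ] [F.IsTriangulated]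
    [G.CommShift ℤ] [G.IsTriangulated] (adj : F ⊣ G) :
    (∀ X : C, X ∈ w.le → F.obj X ∈ v.le) ↔ (∀ Y : D, Y ∈ v.ge → G.obj Y ∈ w.ge) := by
  constructor
  · intro hF Y hY
    rw [WS.ge_iff]
    intro X hX f
    let e := (G.commShiftIso (1:ℤ)).app Y
    have h0 : (adj.homEquiv X (Y⟦(1:ℤ)⟧)).symm (f ≫ e.inv) = 0 :=
      v.orthogonal (hF X hX) (WS.shift_neg_mem v hY) _
    have hg : f ≫ e.inv = 0 := by
      have := congrArg (adj.homEquiv X (Y⟦(1:ℤ)⟧)) h0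
      simp only [Equiv.apply_symm_apply] at this
      rw [this, Adjunction.homEquiv_apply, G.map_zero, Limits.comp_zero]
    have : f = (f ≫ e.inv) ≫ e.hom := by simp
    rw [this, hg, Limits.zero_comp]
  · intro hG X hX
    rw [WS.le_iff]
    intro Y hY f
    let e := (G.commShiftIso (1:ℤ)).app Y
    have h0 : (adj.homEquiv X (Y⟦(1:ℤ)⟧)) f ≫ e.hom = 0 :=
      w.orthogonal hX (WS.shift_neg_mem w (hG Y hY)) _
    have hg : (adj.homEquiv X (Y⟦(1:ℤ)⟧)) f = 0 := by
      have : (adj.homEquiv X (Y⟦(1:ℤ)⟧)) f = ((adj.homEquiv X (Y⟦(1:ℤ)⟧)) f ≫ e.hom) ≫ e.inv := by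
        simp
      rw [this, h0, Limits.zero_comp]
    have := congrArg (adj.homEquiv X (Y⟦(1:ℤ)⟧)).symm hg
    simp only [Equiv.symm_apply_apply] at this
    rw [this, Adjunction.homEquiv_symm_apply, F.map_zero, Limits.zero_comp]
end

section
/- Let C be a triangulated category with a weight structure w, and let l \le m be integers. Then the class C_{[l,m]} = C_{w\ge l} \cap C_{w\le m} is the smallest retract-closed, extension-closed subclass of objects of C containing the union of the hearts C_{w=j} for l \le j \le m. -/
open CategoryTheory Limits Pretriangulated Opposite

universe v u

variable (C : Type u) [Category.{v} C] [Preadditive C] [HasZeroObject C] [HasShift C ℤ]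
  [∀ n : ℤ, (shiftFunctor C n).Additive] [Pretriangulated C]

namespace WeightStructure

variable {C}
variable (w : WeightStructure C)

lemma mem_le_of_iso {X Y : C} (e : X ≅ Y) (h : Y ∈ w.le) : X ∈ w.le :=
  w.le_retract h e.hom e.inv e.hom_inv_id

lemma mem_ge_of_iso {X Y : C} (e : X ≅ Y) (h : Y ∈ w.ge) : X ∈ w.ge :=
  w.ge_retract h e.hom e.inv e.hom_inv_id

/-- Transfer membership in `le` along the isomorphism `X⟦a⟧⟦b⟧ ≅ X⟦c⟧` when `a + b = c`. -/
lemma le_shift_shift {X : C} {a b c : ℤ} (h : a + b = c) (hX : X⟦c⟧ ∈ w.le) :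
    X⟦a⟧⟦b⟧ ∈ w.le :=
  w.mem_le_of_iso ((shiftFunctorAdd' C a b c h).app X).symm hX

lemma le_shift_shift' {X : C} {a b c : ℤ} (h : a + b = c) (hX : X⟦a⟧⟦b⟧ ∈ w.le) :
    X⟦c⟧ ∈ w.le :=
  w.mem_le_of_iso ((shiftFunctorAdd' C a b c h).app X) hX

lemma ge_shift_shift {X : C} {a b c : ℤ} (h : a + b = c) (hX : X⟦c⟧ ∈ w.ge) :
    X⟦a⟧⟦b⟧ ∈ w.ge :=
  w.mem_ge_of_iso ((shiftFunctorAdd' C a b c h).app X).symm hX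

lemma ge_shift_shift' {X : C} {a b c : ℤ} (h : a + b = c) (hX : X⟦a⟧⟦b⟧ ∈ w.ge) :
    X⟦c⟧ ∈ w.ge :=
  w.mem_ge_of_iso ((shiftFunctorAdd' C a b c h).app X) hX

/-- `le` is stable under nonpositive shifts. -/
lemma le_shift_nonpos {X : C} (hX : X ∈ w.le) : ∀ (n : ℤ), n ≤ 0 → X⟦n⟧ ∈ w.le := by
  have key : ∀ k : ℕ, X⟦-(k : ℤ)⟧ ∈ w.le := by
    intro k
    induction k with
    | zero =>
      simp only [Nat.cast_zero, neg_zero]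
      exact w.mem_le_of_iso ((shiftFunctorZero C ℤ).app X) hX
    | succ k ih =>
      have : X⟦-(k : ℤ)⟧⟦(-1 : ℤ)⟧ ∈ w.le := w.le_shift ih
      exact w.le_shift_shift' (by push_cast; ring) this
  intro n hn
  have : X⟦-((-n).toNat : ℤ)⟧ ∈ w.le := key _
  rwa [Int.toNat_of_nonneg (by omega), neg_neg] at this

/-- `ge` is stable under nonnegative shifts. -/
lemma ge_shift_nonneg {X : C} (hX : X ∈ w.ge) : ∀ (n : ℤ), 0 ≤ n → X⟦n⟧ ∈ w.ge := by
  have key : ∀ k : ℕ, X⟦(k : ℤ)⟧ ∈ w.ge := by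
    intro k
    induction k with
    | zero => exact w.mem_ge_of_iso ((shiftFunctorZero C ℤ).app X) hX
    | succ k ih =>
      have : X⟦(k : ℤ)⟧⟦(1 : ℤ)⟧ ∈ w.ge := w.ge_shift ih
      exact w.ge_shift_shift' (by push_cast; ring) this
  intro n hn
  have : X⟦(n.toNat : ℤ)⟧ ∈ w.ge := key _
  rwa [Int.toNat_of_nonneg hn] at this

/-- Characterization of `le` via orthogonality. -/
lemma mem_le_iff (X : C) :
    X ∈ w.le ↔ ∀ Y : C, Y⟦(-1 : ℤ)⟧ ∈ w.ge → ∀ f : X ⟶ Y, f = 0 := by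
  constructor
  · intro hX Y hY f
    exact w.orthogonal hX hY f
  · intro h
    obtain ⟨A, B, f, g, hh, hT, hA, hB⟩ := w.decomp X
    have hg : g = 0 := h B hB g
    obtain ⟨s, hs⟩ := Triangle.coyoneda_exact₂ _ hT (𝟙 X) (by subst hg; exact comp_zero)
    exact w.le_retract hA s f hs.symm

/-- Characterization of `C_{w ≥ 1}` via orthogonality. -/
lemma shift_mem_ge_iff (Y : C) :
    Y⟦(-1 : ℤ)⟧ ∈ w.ge ↔ ∀ X : C, X ∈ w.le → ∀ f : X ⟶ Y, f = 0 := by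
  constructor
  · intro hY X hX f
    exact w.orthogonal hX hY f
  · intro h
    obtain ⟨A, B, f, g, hh, hT, hA, hB⟩ := w.decomp Y
    have hf : f = 0 := h A hA f
    obtain ⟨r, hr⟩ : ∃ r : B ⟶ Y, 𝟙 Y = g ≫ r :=
      Triangle.yoneda_exact₂ _ hT (𝟙 Y) (by subst hf; exact zero_comp)
    exact w.ge_retract hB ((shiftFunctor C (-1 : ℤ)).map g)
      ((shiftFunctor C (-1 : ℤ)).map r)
      (by rw [← Functor.map_comp, show g ≫ r = 𝟙 Y from hr.symm, CategoryTheory.Functor.map_id])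

/-- `le` is closed under extensions. -/
lemma le_ext (T : Triangle C) (hT : T ∈ distTriang C)
    (h₁ : T.obj₁ ∈ w.le) (h₃ : T.obj₃ ∈ w.le) : T.obj₂ ∈ w.le := by
  rw [mem_le_iff]
  intro Y hY f
  obtain ⟨g, hg⟩ := Triangle.yoneda_exact₂ _ hT f (w.orthogonal h₁ hY _)
  rw [hg, w.orthogonal h₃ hY g, comp_zero]

/-- `C_{w ≥ 1}` is closed under extensions. -/
lemma ge_shift_ext (T : Triangle C) (hT : T ∈ distTriang C)
    (h₁ : T.obj₁⟦(-1 : ℤ)⟧ ∈ w.ge) (h₃ : T.obj₃⟦(-1 : ℤ)⟧ ∈ w.ge) :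
    T.obj₂⟦(-1 : ℤ)⟧ ∈ w.ge := by
  rw [shift_mem_ge_iff]
  intro X hX f
  obtain ⟨a, ha⟩ := Triangle.coyoneda_exact₂ _ hT f (w.orthogonal hX h₃ (f ≫ T.mor₂))
  rw [ha, w.orthogonal hX h₁ a, zero_comp]

/-- `ge` is closed under extensions. -/
lemma ge_ext (T : Triangle C) (hT : T ∈ distTriang C)
    (h₁ : T.obj₁ ∈ w.ge) (h₃ : T.obj₃ ∈ w.ge) : T.obj₂ ∈ w.ge := by
  have hT' := Triangle.shift_distinguished T hT 1
  have h₁' : T.obj₁⟦(1 : ℤ)⟧⟦(-1 : ℤ)⟧ ∈ w.ge :=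
    w.ge_shift_shift (by ring) (w.mem_ge_of_iso ((shiftFunctorZero C ℤ).app _) h₁)
  have h₃' : T.obj₃⟦(1 : ℤ)⟧⟦(-1 : ℤ)⟧ ∈ w.ge :=
    w.ge_shift_shift (by ring) (w.mem_ge_of_iso ((shiftFunctorZero C ℤ).app _) h₃)
  have h₂' : T.obj₂⟦(1 : ℤ)⟧⟦(-1 : ℤ)⟧ ∈ w.ge :=
    w.ge_shift_ext _ hT' h₁' h₃'
  exact w.mem_ge_of_iso ((shiftFunctorZero C ℤ).app _).symm
    (w.ge_shift_shift' (by ring) h₂')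

/-- Any zero object is in `le`. -/
lemma zero_mem_le {Z : C} (hZ : IsZero Z) : Z ∈ w.le := by
  obtain ⟨A, B, f, g, hh, hT, hA, hB⟩ := w.decomp Z
  exact w.le_retract hA 0 0 (by rw [comp_zero]; exact (hZ.eq_of_src _ _).symm)

/-- Any zero object is in `ge`. -/
lemma zero_mem_ge {Z : C} (hZ : IsZero Z) : Z ∈ w.ge := by
  obtain ⟨A, B, f, g, hh, hT, hA, hB⟩ := w.decomp Z
  have hZ' : IsZero (Z⟦(-1 : ℤ)⟧) := (shiftFunctor C (-1 : ℤ)).map_isZero hZ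
  have : Z⟦(-1 : ℤ)⟧ ∈ w.ge :=
    w.ge_retract hB 0 0 (by rw [comp_zero]; exact (hZ'.eq_of_src _ _).symm)
  exact w.mem_ge_of_iso ((shiftFunctorZero C ℤ).app _).symm
    (w.ge_shift_shift' (a := -1) (b := 1) (by ring) (w.ge_shift this))

/-- The key inductive step: any object of `C_{[l,m]}` lies in every retract-closed,
extension-closed class containing the hearts `C_{w=j}` for `l ≤ j ≤ m`. -/
lemma main_aux :
    ∀ n : ℕ, ∀ l m : ℤ, m = l + n → ∀ S : Set C,
      (∀ ⦃X Y : C⦄, X ∈ S → ∀ (i : Y ⟶ X) (r : X ⟶ Y), i ≫ r = 𝟙 Y → Y ∈ S) →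
      (∀ (T : Triangle C), T ∈ (distTriang C) → T.obj₁ ∈ S → T.obj₃ ∈ S → T.obj₂ ∈ S) →
      (∀ j : ℤ, l ≤ j → j ≤ m →
        ∀ X : C, X⟦(-j : ℤ)⟧ ∈ w.le → X⟦(-j : ℤ)⟧ ∈ w.ge → X ∈ S) →
      ∀ X : C, X⟦(-l : ℤ)⟧ ∈ w.ge → X⟦(-m : ℤ)⟧ ∈ w.le → X ∈ S := by
  intro n
  induction n with
  | zero =>
    intro l m hm S hSr hSe hSh X hge hle
    have hlm : m = l := by omega
    subst hlm
    exact hSh m le_rfl le_rfl X hle hge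
  | succ n ih =>
    intro l m hm S hSr hSe hSh X hge hle
    have hlm : l < m := by omega
    obtain ⟨A, B, f, g, hh, hT, hA, hB⟩ := w.decomp (X⟦(-l : ℤ)⟧)
    set T : Triangle C := Triangle.mk f g hh with hTdef
    -- A ∈ ge, via the inverse rotation of T
    have hAge : A ∈ w.ge := by
      have hT' := inv_rot_of_distTriang _ hT
      have h1 : ((invRotate C).obj T).obj₁ ∈ w.ge := by
        show B⟦(-1 : ℤ)⟧ ∈ w.ge
        exact hB
      have h3 : ((invRotate C).obj T).obj₃ ∈ w.ge := by
        show X⟦(-l : ℤ)⟧ ∈ w.ge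
        exact hge
      exact w.ge_ext _ hT' h1 h3
    -- A⟦l⟧ is in the heart C_{w = l}, hence in S
    have hAS : A⟦(l : ℤ)⟧ ∈ S := by
      refine hSh l le_rfl (le_of_lt hlm) _ ?_ ?_
      · exact w.le_shift_shift (by ring)
          (w.mem_le_of_iso ((shiftFunctorZero C ℤ).app _) hA)
      · exact w.ge_shift_shift (by ring)
          (w.mem_ge_of_iso ((shiftFunctorZero C ℤ).app _) hAge)
    -- B⟦l⟧ is in C_{[l+1, m]}, hence in S by induction
    have hBge : (B⟦(l : ℤ)⟧)⟦(-(l + 1) : ℤ)⟧ ∈ w.ge :=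
      w.ge_shift_shift (by ring) hB
    have hBle : (B⟦(l : ℤ)⟧)⟦(-m : ℤ)⟧ ∈ w.le := by
      -- use the rotated triangle X⟦-l⟧ → B → A⟦1⟧, shifted by l - m
      have hT' := Triangle.shift_distinguished _ (rot_of_distTriang _ hT) (l - m)
      have h1 : ((Triangle.shiftFunctor C (l - m)).obj T.rotate).obj₁ ∈ w.le := by
        show (X⟦(-l : ℤ)⟧)⟦(l - m : ℤ)⟧ ∈ w.le
        exact w.le_shift_shift (by ring) hle
      have h3 : ((Triangle.shiftFunctor C (l - m)).obj T.rotate).obj₃ ∈ w.le := by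
        show (A⟦(1 : ℤ)⟧)⟦(l - m : ℤ)⟧ ∈ w.le
        exact w.le_shift_shift (c := 1 + (l - m)) rfl
          (w.le_shift_nonpos hA (1 + (l - m)) (by omega))
      have h2 : B⟦(l - m : ℤ)⟧ ∈ w.le := w.le_ext _ hT' h1 h3
      exact w.le_shift_shift (by ring) h2
    have hBS : B⟦(l : ℤ)⟧ ∈ S :=
      ih (l + 1) m (by omega) S hSr hSe
        (fun j hj hj' Y h1 h2 => hSh j (by omega) hj' Y h1 h2) _ hBge hBle
    -- Now X⟦-l⟧⟦l⟧ ∈ S by extension, and X is a retract of it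
    have hT' := Triangle.shift_distinguished T hT l
    have hXS : (X⟦(-l : ℤ)⟧)⟦(l : ℤ)⟧ ∈ S := hSe _ hT' hAS hBS
    exact hSr hXS ((shiftFunctorCompIsoId C (-l : ℤ) l (by ring)).app X).inv
      ((shiftFunctorCompIsoId C (-l : ℤ) l (by ring)).app X).hom
      (Iso.inv_hom_id _)

end WeightStructure

/-- `C_{[l,m]}` is the smallest retract-closed extension-closed
class of objects of `C` containing the hearts `C_{w=j}` for `l ≤ j ≤ m`. -/
theorem stmt12 (w : WeightStructure C) (l m : ℤ) (hlm : l ≤ m) :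
    {X : C | X⟦(-l : ℤ)⟧ ∈ w.ge ∧ X⟦(-m : ℤ)⟧ ∈ w.le} =
      ⋂ S ∈ {S : Set C |
        (∀ X : C, IsZero X → X ∈ S) ∧
        (∀ ⦃X Y : C⦄, X ∈ S → ∀ (i : Y ⟶ X) (r : X ⟶ Y), i ≫ r = 𝟙 Y → Y ∈ S) ∧
        (∀ (T : Triangle C), T ∈ (distTriang C) → T.obj₁ ∈ S → T.obj₃ ∈ S → T.obj₂ ∈ S) ∧
        (∀ j : ℤ, l ≤ j → j ≤ m →
          ∀ X : C, X⟦(-j : ℤ)⟧ ∈ w.le → X⟦(-j : ℤ)⟧ ∈ w.ge → X ∈ S)}, S := by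
  apply le_antisymm
  · -- hard direction: C_{[l,m]} is contained in every such S
    intro X hX
    simp only [Set.mem_iInter, Set.mem_setOf_eq]
    rintro S ⟨-, hSr, hSe, hSh⟩
    exact w.main_aux (m - l).toNat l m (by omega) S hSr hSe hSh X hX.1 hX.2
  · -- easy direction: C_{[l,m]} is itself such a class
    intro X hX
    simp only [Set.mem_iInter, Set.mem_setOf_eq] at hX
    refine hX _ ⟨?_, ?_, ?_, ?_⟩
    · intro Z hZ
      exact ⟨w.zero_mem_ge ((shiftFunctor C (-l : ℤ)).map_isZero hZ),
        w.zero_mem_le ((shiftFunctor C (-m : ℤ)).map_isZero hZ)⟩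
    · intro A B hA i r hir
      refine ⟨w.ge_retract hA.1 ((shiftFunctor C (-l : ℤ)).map i)
          ((shiftFunctor C (-l : ℤ)).map r) ?_,
        w.le_retract hA.2 ((shiftFunctor C (-m : ℤ)).map i)
          ((shiftFunctor C (-m : ℤ)).map r) ?_⟩ <;>
      rw [← Functor.map_comp, hir, CategoryTheory.Functor.map_id]
    · intro T hT h₁ h₃
      constructor
      · have hT' := Triangle.shift_distinguished T hT (-l)
        exact w.ge_ext _ hT' h₁.1 h₃.1
      · have hT' := Triangle.shift_distinguished T hT (-m)
        exact w.le_ext _ hT' h₁.2 h₃.2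
    · intro j hj hj' Y h1 h2
      constructor
      · exact w.ge_shift_shift' (a := -j) (b := j - l) (by ring)
          (w.ge_shift_nonneg h2 (j - l) (by omega))
      · exact w.le_shift_shift' (a := -j) (b := j - m) (by ring)
          (w.le_shift_nonpos h1 (j - m) (by omega))
end

section
/- Let C be a triangulated category with a weight structure w and let H : C^{op} \to A be a cohomological functor into an abelian category A. For an object M and an integer m, the subobject (W^m H)(M) := Im(H(w_{\ge m}M) \to H(M)) of H(M) does not depend on the choice of the weight decomposition defining w_{\ge m}M, and it equals Ker(H(M) \to H(w_{\le m-1}M)) for any choice of w_{\le m-1}M. -/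
open CategoryTheory Limits Pretriangulated Opposite

universe v u v₂ u₂

variable (C : Type u) [Category.{v} C] [Preadditive C] [HasZeroObject C] [HasShift C ℤ]
  [∀ n : ℤ, (shiftFunctor C n).Additive] [Pretriangulated C]

theorem aux_hom_zero (w : WeightStructure C) (m : ℤ) {X Y : C}
    (hX : X⟦(1 - m : ℤ)⟧ ∈ w.le) (hY : Y⟦(-m : ℤ)⟧ ∈ w.ge) (f : X ⟶ Y) : f = 0 := by
  have e : (shiftFunctor C (-m : ℤ)).obj Y ≅
      (shiftFunctor C ((1 : ℤ) - m) ⋙ shiftFunctor C (-1 : ℤ)).obj Y :=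
    (shiftFunctorAdd' C (1 - m) (-1) (-m) (by ring)).app Y
  have hge : ((Y⟦(1 - m : ℤ)⟧)⟦(-1 : ℤ)⟧ : C) ∈ w.ge :=
    w.ge_retract hY e.inv e.hom (by simp)
  have hz := w.orthogonal hX hge ((shiftFunctor C ((1 : ℤ) - m)).map f)
  exact (shiftFunctor C ((1 : ℤ) - m)).map_injective (by rw [hz, Functor.map_zero])

/-- for a cohomological functor `H : Cᵒᵖ ⥤ A` and `M ∈ C`, the
weight filtration `(W^m H)(M) = Im(H(w_{≥ m}M) → H(M))` is independent of the
choice of the weight decomposition, and equals `Ker(H(M) → H(w_{≤ m-1}M))`.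
A weight decomposition at `m` is a distinguished triangle `X → M → Y → X⟦1⟧`
with `X ∈ C_{w ≤ m-1}` and `Y ∈ C_{w ≥ m}`. -/
theorem stmt14 (w : WeightStructure C)
    {A : Type u₂} [Category.{v₂} A] [Abelian A]
    (H : Cᵒᵖ ⥤ A) [H.Additive]
    (hH : ∀ (T : Triangle C), T ∈ (distTriang C) →
      ∃ z : H.map T.mor₂.op ≫ H.map T.mor₁.op = 0, (ShortComplex.mk _ _ z).Exact)
    (M : C) (m : ℤ)
    {X Y X' Y' : C}
    (a : X ⟶ M) (b : M ⟶ Y) (c : Y ⟶ X⟦(1 : ℤ)⟧)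
    (hT : Triangle.mk a b c ∈ distTriang C)
    (hX : X⟦(1 - m : ℤ)⟧ ∈ w.le) (hY : Y⟦(-m : ℤ)⟧ ∈ w.ge)
    (a' : X' ⟶ M) (b' : M ⟶ Y') (c' : Y' ⟶ X'⟦(1 : ℤ)⟧)
    (hT' : Triangle.mk a' b' c' ∈ distTriang C)
    (hX' : X'⟦(1 - m : ℤ)⟧ ∈ w.le) (hY' : Y'⟦(-m : ℤ)⟧ ∈ w.ge) :
    imageSubobject (H.map b.op) = imageSubobject (H.map b'.op) ∧
    imageSubobject (H.map b.op) = kernelSubobject (H.map a.op) := by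
  have h1 : a ≫ b' = 0 := aux_hom_zero C w m hX hY' (a ≫ b')
  have h2 : a' ≫ b = 0 := aux_hom_zero C w m hX' hY (a' ≫ b)
  obtain ⟨v, hv⟩ : ∃ v : Y ⟶ Y', b' = b ≫ v := Pretriangulated.Triangle.yoneda_exact₂ _ hT b' h1
  obtain ⟨v', hv'⟩ : ∃ v' : Y' ⟶ Y, b = b' ≫ v' := Pretriangulated.Triangle.yoneda_exact₂ _ hT' b h2
  constructor
  · apply le_antisymm
    · have : H.map b.op = H.map v'.op ≫ H.map b'.op := by
        rw [← H.map_comp, ← op_comp, ← hv']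
      rw [this]
      exact imageSubobject_comp_le _ _
    · have : H.map b'.op = H.map v.op ≫ H.map b.op := by
        rw [← H.map_comp, ← op_comp, ← hv]
      rw [this]
      exact imageSubobject_comp_le _ _
  · obtain ⟨z, hex⟩ := hH (Triangle.mk a b c) hT
    exact (ShortComplex.exact_iff_image_eq_kernel _).mp hex
end

section
/- Let C be a triangulated category with a weight structure w, let M \in C_{w=0}, and suppose M has a weight Postnikov tower with w_{\le i}M = 0 for all i < 0, with associated weight complex t(M) = (\cdots \to M^{-1} \to M^0 \to 0 \to \cdots) concentrated in non-positive degrees. Then there exist objects N^j \in C_{w=0} for j \le 0 such that t(M) is isomorphic, as an object of the category of complexes C(Hw) up to the stated decomposition, to M[0] \oplus \bigoplus_{j \le 0} (N^j \xrightarrow{id} N^j)[-j], i.e., t(M) is the direct sum of M concentrated in degree 0 and contractible two-term complexes. -/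
open CategoryTheory Limits

universe v u

open CategoryTheory Limits Pretriangulated Opposite



variable (C : Type u) [Category.{v} C] [Preadditive C] [HasZeroObject C] [HasShift C ℤ]
  [∀ n : ℤ, (shiftFunctor C n).Additive] [Pretriangulated C]

variable [HasBinaryBiproducts C]

/-- The `n`-th term of the complex `M[0] ⊕ ⨁_{j ≤ 0} (N^j ⟶ N^j)[-j]`
(for `N j` zero for `j > 0`): it is `M` in degree `0` plus `N n ⊞ N (n+1)`. -/
noncomputable def sumX (M : C) (N : ℤ → C) (n : ℤ) : C :=
  ((HomologicalComplex.single C (ComplexShape.up ℤ) 0).obj M).X n ⊞ (N n ⊞ N (n + 1))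

/-- The complex `M[0] ⊕ ⨁_j (N^j ⟶ N^j)[-j]`: the direct sum of `M` placed in
degree `0` and of the contractible two-term complexes `N^j = N^j` placed in
degrees `j-1, j`. -/
noncomputable def sumCx (M : C) (N : ℤ → C) : CochainComplex C ℤ where
  X := sumX C M N
  d i j :=
    if h : i + 1 = j then
      (biprod.map (0 : _ ⟶ _) (biprod.snd ≫ biprod.inl) :
        sumX C M N i ⟶ sumX C M N (i + 1)) ≫ eqToHom (congrArg (sumX C M N) h)
    else 0
  shape i j h := dif_neg h
  d_comp_d' := by
    intro i j k hij hjk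
    change i + 1 = j at hij
    change j + 1 = k at hjk
    subst hij; subst hjk
    rw [dif_pos rfl, dif_pos rfl]
    have key : ∀ (A B D X Y Z W : C), (biprod.map (0 : A ⟶ B) (biprod.snd ≫ biprod.inl : X ⊞ Y ⟶ Y ⊞ Z) ≫ eqToHom rfl) ≫
        (biprod.map (0 : B ⟶ D) (biprod.snd ≫ biprod.inl : Y ⊞ Z ⟶ Z ⊞ W) ≫ eqToHom rfl) = 0 := by
      intros; refine biprod.hom_ext _ _ ?_ ?_ <;> simp
    exact key _ _ _ _ _ _ _

namespace Stmt18Aux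

open ZeroObject

set_option linter.unusedSectionVars false

variable {C : Type u} [Category.{v} C] [Preadditive C] [HasZeroObject C]
  [HasBinaryBiproducts C]

variable (Mc : CochainComplex C ℤ) {M : C}

/-- Degreewise splitting data. -/
structure Dat (m : ℤ) where
  N : C
  i : N ⟶ Mc.X m
  p : Mc.X m ⟶ N

variable (e : HomotopyEquiv Mc ((HomologicalComplex.single C (ComplexShape.up ℤ) 0).obj M))

/-- candidate section -/
noncomputable def σd (m : ℤ) (d' : Dat Mc (m + 1)) : d'.N ⟶ Mc.X m :=
  -(d'.i ≫ e.homotopyHomInvId.hom (m + 1) m)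

/-- the idempotent to split at level `m` -/
noncomputable def rd (m : ℤ) (d' : Dat Mc (m + 1)) : Mc.X m ⟶ Mc.X m :=
  𝟙 _ - e.hom.f m ≫ e.inv.f m - (Mc.d m (m + 1) ≫ d'.p) ≫ σd Mc e m d'

noncomputable def zeroDat (m : ℤ) : Dat Mc m := ⟨0, 0, 0⟩

noncomputable def splitD [IsIdempotentComplete C] {X : C} (p : X ⟶ X) :
    Σ' (N : C) (i : N ⟶ X) (q : X ⟶ N), p ≫ p = p → i ≫ q = 𝟙 N ∧ q ≫ i = p := by
  by_cases h : p ≫ p = p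
  · have h' := IsIdempotentComplete.idempotents_split X p h
    exact ⟨h'.choose, h'.choose_spec.choose, h'.choose_spec.choose_spec.choose,
      fun _ => h'.choose_spec.choose_spec.choose_spec⟩
  · exact ⟨X, 𝟙 X, 𝟙 X, fun h' => absurd h' h⟩

noncomputable def D [IsIdempotentComplete C] : (m : ℤ) → Dat Mc m
  | m =>
    if 1 ≤ m then zeroDat Mc m
    else
      let s := splitD (rd Mc e m (D (m + 1)))
      ⟨s.1, s.2.1, s.2.2.1⟩
  termination_by m => (1 - m).toNat
  decreasing_by omega

lemma D_pos [IsIdempotentComplete C] (m : ℤ) (h : 1 ≤ m) :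
    D Mc e m = zeroDat Mc m := by
  rw [D]; simp [h]

lemma D_spec [IsIdempotentComplete C] (m : ℤ) (h : ¬ 1 ≤ m)
    (hr : rd Mc e m (D Mc e (m + 1)) ≫ rd Mc e m (D Mc e (m + 1)) = rd Mc e m (D Mc e (m + 1))) :
    (D Mc e m).i ≫ (D Mc e m).p = 𝟙 (D Mc e m).N ∧
      (D Mc e m).p ≫ (D Mc e m).i = rd Mc e m (D Mc e (m + 1)) := by
  have hD : D Mc e m = (let s := splitD (rd Mc e m (D Mc e (m + 1)));
      (⟨s.1, s.2.1, s.2.2.1⟩ : Dat Mc m)) := by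
    rw [D]; simp [h]
  rw [hD]
  exact (splitD (rd Mc e m (D Mc e (m + 1)))).2.2.2 hr

lemma I0 (m : ℤ) : e.inv.f m ≫ e.hom.f m =
    𝟙 (((HomologicalComplex.single C (ComplexShape.up ℤ) 0).obj M).X m) := by
  by_cases hm : m = 0
  · subst hm
    have h := e.homotopyInvHomId.comm 0
    rw [dNext_eq e.homotopyInvHomId.hom (show (ComplexShape.up ℤ).Rel 0 1 by simp),
      prevD_eq e.homotopyInvHomId.hom (show (ComplexShape.up ℤ).Rel (-1) 0 by simp)] at h
    simpa using h
  · exact (HomologicalComplex.isZero_single_obj_X (ComplexShape.up ℤ) 0 M m hm).eq_of_src _ _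

lemma chain_f (m k : ℤ) : Mc.d m k ≫ e.hom.f k = 0 := by
  rw [← e.hom.comm, HomologicalComplex.single_obj_d, comp_zero]

lemma chain_g (m k : ℤ) : e.inv.f m ≫ Mc.d m k = 0 := by
  rw [e.inv.comm, HomologicalComplex.single_obj_d, zero_comp]

lemma HR (m : ℤ) : e.hom.f m ≫ e.inv.f m =
    Mc.d m (m + 1) ≫ e.homotopyHomInvId.hom (m + 1) m +
      e.homotopyHomInvId.hom m (m - 1) ≫ Mc.d (m - 1) m + 𝟙 (Mc.X m) := by
  have h := e.homotopyHomInvId.comm m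
  rw [dNext_eq e.homotopyHomInvId.hom (show (ComplexShape.up ℤ).Rel m (m+1) by simp),
    prevD_eq e.homotopyHomInvId.hom (show (ComplexShape.up ℤ).Rel (m-1) m by simp)] at h
  simpa using h

/-- The invariants carried along the construction. -/
def Good (m : ℤ) (d : Dat Mc m) (d' : Dat Mc (m + 1)) : Prop :=
  d.i ≫ d.p = 𝟙 d.N ∧ d.i ≫ Mc.d m (m + 1) = 0 ∧
    d.i ≫ e.hom.f m ≫ e.inv.f m = 0 ∧
    𝟙 (Mc.X m) = e.hom.f m ≫ e.inv.f m + d.p ≫ d.i +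
      (Mc.d m (m + 1) ≫ d'.p) ≫ σd Mc e m d'

/-- key: the candidate section `σd` is a section of `d ≫ p'`. -/
lemma K1 (m : ℤ) (d' : Dat Mc (m + 1)) (h2 : d'.i ≫ Mc.d (m + 1) (m + 1 + 1) = 0)
    (h3 : d'.i ≫ e.hom.f (m + 1) ≫ e.inv.f (m + 1) = 0) :
    σd Mc e m d' ≫ Mc.d m (m + 1) = d'.i := by
  have h := congrArg (fun z => d'.i ≫ z) (HR Mc e (m + 1))
  simp only [Preadditive.comp_add, Category.comp_id, reassoc_of% h2, zero_comp, zero_add] at h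
  rw [h3] at h
  rw [show m + 1 - 1 = m from by omega] at h
  have h' : d'.i = -(d'.i ≫ e.homotopyHomInvId.hom (m + 1) m ≫ Mc.d m (m + 1)) :=
    eq_neg_of_add_eq_zero_right h.symm
  rw [σd, Preadditive.neg_comp, Category.assoc, ← h']


theorem goodD [IsIdempotentComplete C] (hpos : ∀ n : ℤ, 0 < n → IsZero (Mc.X n)) :
    ∀ m : ℤ, Good Mc e m (D Mc e m) (D Mc e (m + 1)) := by
  have base : ∀ m : ℤ, 1 ≤ m → Good Mc e m (D Mc e m) (D Mc e (m + 1)) := by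
    intro m hm
    have hz := hpos m (by omega)
    rw [Good, D_pos Mc e m hm, D_pos Mc e (m + 1) (by omega)]
    exact ⟨(isZero_zero C).eq_of_src _ _, (isZero_zero C).eq_of_src _ _,
      (isZero_zero C).eq_of_src _ _, hz.eq_of_src _ _⟩
  have key : ∀ (k : ℕ) (m : ℤ), 1 - m ≤ (k : ℤ) → Good Mc e m (D Mc e m) (D Mc e (m + 1)) := by
    intro k
    induction k with
    | zero => intro m hm; exact base m (by omega)
    | succ k ih =>
      intro m hmk
      by_cases hm1 : 1 ≤ m
      · exact base m hm1
      · have hG' := ih (m + 1) (by push_cast; omega)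
        obtain ⟨h1', h2', h3', h4'⟩ := hG'
        have k1 : σd Mc e m (D Mc e (m + 1)) ≫ Mc.d m (m + 1) = (D Mc e (m + 1)).i :=
          K1 Mc e m (D Mc e (m + 1)) h2' h3'
        have k2 : σd Mc e m (D Mc e (m + 1)) ≫ (Mc.d m (m + 1) ≫ (D Mc e (m + 1)).p) =
            𝟙 (D Mc e (m + 1)).N := by
          rw [← Category.assoc, k1, h1']
        have hσf : σd Mc e m (D Mc e (m + 1)) ≫ e.hom.f m = 0 := by
          by_cases hm0 : m = 0
          · subst hm0
            have : (D Mc e (0 + 1)).i = 0 := by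
              rw [D_pos Mc e (0 + 1) (by omega)]
              exact (isZero_zero C).eq_of_src _ _
            rw [σd, this]; simp
          · exact (HomologicalComplex.isZero_single_obj_X
              (ComplexShape.up ℤ) 0 M m hm0).eq_of_tgt _ _
        -- idempotency of rd
        have haa : (e.hom.f m ≫ e.inv.f m) ≫ (e.hom.f m ≫ e.inv.f m) =
            e.hom.f m ≫ e.inv.f m := by
          rw [Category.assoc, ← Category.assoc (e.inv.f m), I0 Mc e m,
            Category.id_comp]
        have hab : (e.hom.f m ≫ e.inv.f m) ≫
            ((Mc.d m (m + 1) ≫ (D Mc e (m + 1)).p) ≫ σd Mc e m (D Mc e (m + 1))) = 0 := by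
          rw [Category.assoc, ← Category.assoc (e.inv.f m), ← Category.assoc (e.inv.f m),
            chain_g]
          simp
        have hba : ((Mc.d m (m + 1) ≫ (D Mc e (m + 1)).p) ≫ σd Mc e m (D Mc e (m + 1))) ≫
            (e.hom.f m ≫ e.inv.f m) = 0 := by
          rw [Category.assoc, ← Category.assoc _ (e.hom.f m), hσf]
          simp
        have hbb : ((Mc.d m (m + 1) ≫ (D Mc e (m + 1)).p) ≫ σd Mc e m (D Mc e (m + 1))) ≫
            ((Mc.d m (m + 1) ≫ (D Mc e (m + 1)).p) ≫ σd Mc e m (D Mc e (m + 1))) =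
            (Mc.d m (m + 1) ≫ (D Mc e (m + 1)).p) ≫ σd Mc e m (D Mc e (m + 1)) := by
          rw [Category.assoc, ← Category.assoc _ (Mc.d m (m + 1) ≫ (D Mc e (m + 1)).p), k2]
          simp
        have hr : rd Mc e m (D Mc e (m + 1)) ≫ rd Mc e m (D Mc e (m + 1)) =
            rd Mc e m (D Mc e (m + 1)) := by
          simp only [rd, Preadditive.sub_comp, Preadditive.comp_sub, Category.id_comp,
            Category.comp_id, haa, hab, hba, hbb]
          abel
        obtain ⟨g1, gpi⟩ := D_spec Mc e m hm1 hr
        have hiR : (D Mc e m).i ≫ rd Mc e m (D Mc e (m + 1)) = (D Mc e m).i := by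
          rw [← gpi, ← Category.assoc, g1, Category.id_comp]
        have hrdd : rd Mc e m (D Mc e (m + 1)) ≫ Mc.d m (m + 1) =
            Mc.d m (m + 1) - (Mc.d m (m + 1) ≫ (D Mc e (m + 1)).p) ≫ (D Mc e (m + 1)).i := by
          simp only [rd, Preadditive.sub_comp, Category.id_comp, Category.assoc, k1]
          rw [chain_g Mc e m (m + 1)]
          simp
        have step2 : (D Mc e m).i ≫ Mc.d m (m + 1) ≫ (D Mc e (m + 1)).p = 0 := by
          have h := congrArg (fun z => (D Mc e m).i ≫ z) hrdd
          simp only [Preadditive.comp_sub] at h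
          rw [← Category.assoc, hiR] at h
          have h0 : (D Mc e m).i ≫ (Mc.d m (m + 1) ≫ (D Mc e (m + 1)).p) ≫
              (D Mc e (m + 1)).i = 0 := by
            rw [eq_sub_iff_add_eq] at h
            have := congrArg (fun z => z - (D Mc e m).i ≫ Mc.d m (m + 1)) h
            simpa using this
          have := congrArg (fun z => z ≫ (D Mc e (m + 1)).p) h0
          simpa [Category.assoc, h1'] using this
        have g2 : (D Mc e m).i ≫ Mc.d m (m + 1) = 0 := by
          have h := congrArg (fun z => (D Mc e m).i ≫ Mc.d m (m + 1) ≫ z) h4'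
          simp only [Category.comp_id, Preadditive.comp_add, Category.assoc] at h
          simp only [reassoc_of% (chain_f Mc e m (m + 1)), reassoc_of% step2,
            HomologicalComplex.d_comp_d_assoc, zero_comp, comp_zero, add_zero, zero_add] at h
          exact h
        have g3 : (D Mc e m).i ≫ e.hom.f m ≫ e.inv.f m = 0 := by
          have hfg : e.hom.f m ≫ e.inv.f m = 𝟙 (Mc.X m) - rd Mc e m (D Mc e (m + 1)) -
              (Mc.d m (m + 1) ≫ (D Mc e (m + 1)).p) ≫ σd Mc e m (D Mc e (m + 1)) := by
            rw [rd]; abel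
          rw [hfg]
          simp only [Preadditive.comp_sub, Category.comp_id, Category.assoc]
          simp only [← Category.assoc, hiR]  -- careful
          simp only [Category.assoc, reassoc_of% step2, zero_comp, comp_zero]
          abel
        have g4 : 𝟙 (Mc.X m) = e.hom.f m ≫ e.inv.f m + (D Mc e m).p ≫ (D Mc e m).i +
            (Mc.d m (m + 1) ≫ (D Mc e (m + 1)).p) ≫ σd Mc e m (D Mc e (m + 1)) := by
          rw [gpi, rd]; abel
        exact ⟨g1, g2, g3, g4⟩
  intro m
  exact key (1 - m).toNat m (by omega)


section Iso

variable [IsIdempotentComplete C] (hpos : ∀ n : ℤ, 0 < n → IsZero (Mc.X n))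

/-- The degreewise isomorphism. -/
noncomputable def ψ (m : ℤ) :
    Mc.X m ≅ ((HomologicalComplex.single C (ComplexShape.up ℤ) 0).obj M).X m ⊞
      ((D Mc e m).N ⊞ (D Mc e (m + 1)).N) where
  hom := biprod.lift (e.hom.f m)
    (biprod.lift (D Mc e m).p (Mc.d m (m + 1) ≫ (D Mc e (m + 1)).p))
  inv := biprod.desc (e.inv.f m)
    (biprod.desc (D Mc e m).i (σd Mc e m (D Mc e (m + 1))))
  hom_inv_id := by
    obtain ⟨g1, g2, g3, g4⟩ := goodD Mc e hpos m
    rw [biprod.lift_desc, biprod.lift_desc, g4]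
    abel
  inv_hom_id := by
    obtain ⟨g1, g2, g3, g4⟩ := goodD Mc e hpos m
    obtain ⟨h1', h2', h3', h4'⟩ := goodD Mc e hpos (m + 1)
    have k1 := K1 Mc e m (D Mc e (m + 1)) h2' h3'
    have E13 : e.inv.f m ≫ Mc.d m (m + 1) ≫ (D Mc e (m + 1)).p = 0 := by
      rw [← Category.assoc, chain_g, zero_comp]
    have E12 : e.inv.f m ≫ (D Mc e m).p = 0 := by
      have h := congrArg (fun z => e.inv.f m ≫ z) g4
      simp only [Category.comp_id, Preadditive.comp_add, Category.assoc] at h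
      rw [← Category.assoc (e.inv.f m) (e.hom.f m), I0 Mc e m, Category.id_comp] at h
      rw [reassoc_of% (chain_g Mc e m (m + 1))] at h
      simp only [zero_comp, add_zero] at h
      have h0 : e.inv.f m ≫ (D Mc e m).p ≫ (D Mc e m).i = 0 := by
        have := left_eq_add.mp h
        simpa using this
      have h2 := congrArg (fun z => z ≫ (D Mc e m).p) h0
      simpa [Category.assoc, g1] using h2
    have E21 : (D Mc e m).i ≫ e.hom.f m = 0 := by
      have : (D Mc e m).i ≫ e.hom.f m =
          ((D Mc e m).i ≫ e.hom.f m ≫ e.inv.f m) ≫ e.hom.f m := by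
        simp only [Category.assoc]
        rw [I0 Mc e m, Category.comp_id]
      rw [this, g3, zero_comp]
    have E23 : (D Mc e m).i ≫ Mc.d m (m + 1) ≫ (D Mc e (m + 1)).p = 0 := by
      rw [← Category.assoc, g2, zero_comp]
    have E31 : σd Mc e m (D Mc e (m + 1)) ≫ e.hom.f m = 0 := by
      by_cases hm0 : m = 0
      · subst hm0
        have hz : (D Mc e (0 + 1)).i = 0 := by
          rw [D_pos Mc e (0 + 1) (by omega)]
          exact (isZero_zero C).eq_of_src _ _
        rw [σd, hz]; simp
      · exact (HomologicalComplex.isZero_single_obj_X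
          (ComplexShape.up ℤ) 0 M m hm0).eq_of_tgt _ _
    have E33 : σd Mc e m (D Mc e (m + 1)) ≫ Mc.d m (m + 1) ≫ (D Mc e (m + 1)).p =
        𝟙 (D Mc e (m + 1)).N := by
      rw [← Category.assoc, k1, h1']
    have E32 : σd Mc e m (D Mc e (m + 1)) ≫ (D Mc e m).p = 0 := by
      have h := congrArg (fun z => σd Mc e m (D Mc e (m + 1)) ≫ z) g4
      simp only [Category.comp_id, Preadditive.comp_add, Category.assoc] at h
      rw [reassoc_of% E31] at h
      simp only [zero_comp, zero_add] at h
      rw [reassoc_of% k1, reassoc_of% h1'] at h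
      have h0 : σd Mc e m (D Mc e (m + 1)) ≫ (D Mc e m).p ≫ (D Mc e m).i = 0 := by
        exact right_eq_add.mp h
      have h2 := congrArg (fun z => z ≫ (D Mc e m).p) h0
      simpa [Category.assoc, g1] using h2
    apply biprod.hom_ext'
    · apply biprod.hom_ext
      · simp [I0 Mc e m]
      · apply biprod.hom_ext
        · simp [E12]
        · simp [E13]
    · apply biprod.hom_ext
      · apply biprod.hom_ext'
        · simp [E21]
        · simp [E31]
      · apply biprod.hom_ext
        · apply biprod.hom_ext'
          · simp [g1]
          · simp [E32]
        · apply biprod.hom_ext'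
          · simp [E23]
          · simp [E33]

end Iso

end Stmt18Aux

/-- if `M` lies in the heart and `Mc` is a weight complex of `M`
concentrated in non-positive degrees (with terms in the heart, homotopy
equivalent to `M` placed in degree `0`), then there exist heart objects `N^j`
(`j ≤ 0`) such that `Mc` is isomorphic, as a complex, to the direct sum of
`M[0]` and the contractible two-term complexes `(N^j = N^j)[-j]`. -/
theorem stmt18 [IsIdempotentComplete C] (w : WeightStructure C)
    (M : C) (hM : M ∈ w.le ∧ M ∈ w.ge)
    (Mc : CochainComplex C ℤ)
    (hMcHeart : ∀ n : ℤ, n ≤ 0 → Mc.X n ∈ w.le ∧ Mc.X n ∈ w.ge)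
    (hMcpos : ∀ n : ℤ, 0 < n → IsZero (Mc.X n))
    (e : HomotopyEquiv Mc ((HomologicalComplex.single C (ComplexShape.up ℤ) 0).obj M)) :
    ∃ N : ℤ → C,
      (∀ j : ℤ, j ≤ 0 → N j ∈ w.le ∧ N j ∈ w.ge) ∧
      (∀ j : ℤ, 0 < j → IsZero (N j)) ∧
      Nonempty (Mc ≅ sumCx C M N) := by
  classical
  have hgood := fun m => Stmt18Aux.goodD Mc e hMcpos m
  refine ⟨fun j => (Stmt18Aux.D Mc e j).N, ?_, ?_, ?_⟩
  · intro j hj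
    have h1 := (hgood j).1
    exact ⟨w.le_retract (hMcHeart j hj).1 _ _ h1, w.ge_retract (hMcHeart j hj).2 _ _ h1⟩
  · intro j hj
    have hD : Stmt18Aux.D Mc e j = Stmt18Aux.zeroDat Mc j := Stmt18Aux.D_pos Mc e j (by omega)
    show IsZero (Stmt18Aux.D Mc e j).N
    rw [hD]
    exact isZero_zero C
  · refine ⟨HomologicalComplex.Hom.isoOfComponents
      (fun m => Stmt18Aux.ψ Mc e hMcpos m) ?_⟩
    intro i j hij
    obtain rfl : j = i + 1 := by simpa using hij.symm
    have hd : (sumCx C M (fun j => (Stmt18Aux.D Mc e j).N)).d i (i + 1) =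
        biprod.map (0 : _ ⟶ _) (biprod.snd ≫ biprod.inl) := by
      simp [sumCx]
      exact Category.comp_id _
    rw [hd]
    dsimp only [sumCx, sumX]
    apply biprod.hom_ext
    · simp [Stmt18Aux.ψ, Stmt18Aux.chain_f Mc e i (i + 1)]
    · apply biprod.hom_ext
      · simp [Stmt18Aux.ψ]
      · simp [Stmt18Aux.ψ]
end
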